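/- Fix $\varepsilon^*>0$. Under the setup of the pathwise $\varepsilon$-approximations $Y_\varepsilon$ (continuous solutions driven by a fixed continuous path $g$, with uniqueness of solutions for each $\varepsilon>0$), for every $t>0$ one has $\lim_{\varepsilon\to\varepsilon^*} Y_\varepsilon(t) = Y_{\varepsilon^*}(t)$; i.e., the map $\varepsilon\mapsto Y_\varepsilon(t)$ is continuous on $(0,\infty)$. -/

import Mathlib

open Filter Topology MeasureTheory Set Real

private lemma if_pos_eq_max (x : ℝ) : (if 0 < x then x else 0) = max x 0 := by
  rcases lt_or_ge 0 x with h | h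
  · simp [h, max_eq_left h.le]
  · simp [not_lt.2 h, max_eq_right h]

/-- Key quantitative stability estimate in ε, via Grönwall. -/
private lemma key_estimate (Y₀ k a σ : ℝ) (hk : 0 < k) (ha : 0 ≤ a)
    (g : ℝ → ℝ) (hg0 : g 0 = 0)
    (ε' ε₁ ε₂ : ℝ) (hε' : 0 < ε') (h1 : ε' / 2 ≤ ε₁) (h2 : ε' / 2 ≤ ε₂)
    (Y₁ Y₂ : ℝ → ℝ) (hc1 : Continuous Y₁) (hc2 : Continuous Y₂)
    (heq1 : ∀ t : ℝ, 0 ≤ t →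
      Y₁ t = Y₀ + (∫ s in (0:ℝ)..t, k / ((if 0 < Y₁ s then Y₁ s else 0) + ε₁))
        - a * (∫ s in (0:ℝ)..t, Y₁ s) + σ * g t)
    (heq2 : ∀ t : ℝ, 0 ≤ t →
      Y₂ t = Y₀ + (∫ s in (0:ℝ)..t, k / ((if 0 < Y₂ s then Y₂ s else 0) + ε₂))
        - a * (∫ s in (0:ℝ)..t, Y₂ s) + σ * g t)
    (t : ℝ) (ht : 0 ≤ t) :
    |Y₁ t - Y₂ t| ≤ gronwallBound 0 (k * (4 / ε' ^ 2) + a) (k * (4 / ε' ^ 2) * |ε₁ - ε₂|) t := by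
  have hε2 : (0:ℝ) < ε' / 2 := by linarith
  have hε1pos : 0 < ε₁ := lt_of_lt_of_le hε2 h1
  have hε2pos : 0 < ε₂ := lt_of_lt_of_le hε2 h2
  -- continuous integrands
  have hM1 : Continuous fun s => max (Y₁ s) 0 + ε₁ := (hc1.max continuous_const).add continuous_const
  have hM2 : Continuous fun s => max (Y₂ s) 0 + ε₂ := (hc2.max continuous_const).add continuous_const
  have hM1pos : ∀ s, 0 < max (Y₁ s) 0 + ε₁ := fun s =>
    add_pos_of_nonneg_of_pos (le_max_right _ _) hε1pos
  have hM2pos : ∀ s, 0 < max (Y₂ s) 0 + ε₂ := fun s =>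
    add_pos_of_nonneg_of_pos (le_max_right _ _) hε2pos
  have hf1 : Continuous fun s => k / (max (Y₁ s) 0 + ε₁) :=
    continuous_const.div hM1 (fun s => (hM1pos s).ne')
  have hf2 : Continuous fun s => k / (max (Y₂ s) 0 + ε₂) :=
    continuous_const.div hM2 (fun s => (hM2pos s).ne')
  set F : ℝ → ℝ := fun s => Y₁ s - Y₂ s with hF
  set h : ℝ → ℝ := fun s =>
    k / (max (Y₁ s) 0 + ε₁) - k / (max (Y₂ s) 0 + ε₂) - a * F s with hh
  have hhc : Continuous h := ((hf1.sub hf2).sub (continuous_const.mul (hc1.sub hc2)))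
  -- rewrite the equations in max form
  have heq1' : ∀ u : ℝ, 0 ≤ u →
      Y₁ u = Y₀ + (∫ s in (0:ℝ)..u, k / (max (Y₁ s) 0 + ε₁))
        - a * (∫ s in (0:ℝ)..u, Y₁ s) + σ * g u := by
    intro u hu
    have := heq1 u hu
    simpa only [if_pos_eq_max] using this
  have heq2' : ∀ u : ℝ, 0 ≤ u →
      Y₂ u = Y₀ + (∫ s in (0:ℝ)..u, k / (max (Y₂ s) 0 + ε₂))
        - a * (∫ s in (0:ℝ)..u, Y₂ s) + σ * g u := by
    intro u hu
    have := heq2 u hu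
    simpa only [if_pos_eq_max] using this
  -- F equals the integral of h on [0, ∞)
  have hFint : ∀ u : ℝ, 0 ≤ u → F u = ∫ s in (0:ℝ)..u, h s := by
    intro u hu
    have i1 : IntervalIntegrable (fun s => k / (max (Y₁ s) 0 + ε₁)) volume 0 u :=
      hf1.intervalIntegrable _ _
    have i2 : IntervalIntegrable (fun s => k / (max (Y₂ s) 0 + ε₂)) volume 0 u :=
      hf2.intervalIntegrable _ _
    have i3 : IntervalIntegrable (fun s => a * F s) volume 0 u :=
      (continuous_const.mul (hc1.sub hc2)).intervalIntegrable _ _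
    have : (∫ s in (0:ℝ)..u, h s)
        = (∫ s in (0:ℝ)..u, k / (max (Y₁ s) 0 + ε₁))
          - (∫ s in (0:ℝ)..u, k / (max (Y₂ s) 0 + ε₂))
          - ∫ s in (0:ℝ)..u, a * F s := by
      rw [intervalIntegral.integral_sub (i1.sub i2) i3, intervalIntegral.integral_sub i1 i2]
    rw [this, intervalIntegral.integral_const_mul,
      intervalIntegral.integral_sub (hc1.intervalIntegrable _ _) (hc2.intervalIntegrable _ _)]
    have e1 := heq1' u hu
    have e2 := heq2' u hu
    simp only [hF]
    rw [e1, e2]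
    ring
  -- derivative of F on [0, t)
  have hderiv : ∀ x ∈ Ico (0:ℝ) t, HasDerivWithinAt F (h x) (Ici x) x := by
    intro x hx
    have hG : HasDerivAt (fun u => ∫ s in (0:ℝ)..u, h s) (h x) x :=
      (hhc.integral_hasStrictDerivAt 0 x).hasDerivAt
    refine (hG.hasDerivWithinAt (s := Ici x)).congr ?_ ?_
    · intro y hy
      exact hFint y (le_trans hx.1 hy)
    · exact hFint x hx.1
  -- the pointwise bound
  have hbound : ∀ x ∈ Ico (0:ℝ) t,
      ‖h x‖ ≤ (k * (4 / ε' ^ 2) + a) * ‖F x‖ + k * (4 / ε' ^ 2) * |ε₁ - ε₂| := by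
    intro x _
    set u := max (Y₁ x) 0 + ε₁ with hu
    set v := max (Y₂ x) 0 + ε₂ with hv
    have hupos : 0 < u := hM1pos x
    have hvpos : 0 < v := hM2pos x
    have huge : ε' / 2 ≤ u := le_trans h1 (le_add_of_nonneg_left (le_max_right _ _))
    have hvge : ε' / 2 ≤ v := le_trans h2 (le_add_of_nonneg_left (le_max_right _ _))
    have huv : ε' ^ 2 / 4 ≤ u * v := by
      calc ε' ^ 2 / 4 = (ε' / 2) * (ε' / 2) := by ring
      _ ≤ u * v := mul_le_mul huge hvge hε2.le (le_trans hε2.le huge)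
    have hdiff : k / u - k / v = k * (v - u) / (u * v) := by
      field_simp
    have hvu : |v - u| ≤ |F x| + |ε₁ - ε₂| := by
      have : v - u = (max (Y₂ x) 0 - max (Y₁ x) 0) + (ε₂ - ε₁) := by rw [hu, hv]; ring
      rw [this]
      refine (abs_add_le _ _).trans (add_le_add ?_ ?_)
      · calc |max (Y₂ x) 0 - max (Y₁ x) 0| ≤ max |Y₂ x - Y₁ x| |0 - 0| :=
              abs_max_sub_max_le_max (Y₂ x) 0 (Y₁ x) 0
        _ = |Y₂ x - Y₁ x| := by simp
        _ = |F x| := by rw [hF, abs_sub_comm]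
      · rw [abs_sub_comm]
    have hinv : 1 / (u * v) ≤ 4 / ε' ^ 2 := by
      rw [div_le_div_iff₀ (mul_pos hupos hvpos) (pow_pos hε' 2)]
      nlinarith
    have hfrac : |k / u - k / v| ≤ k * (4 / ε' ^ 2) * (|F x| + |ε₁ - ε₂|) := by
      rw [hdiff, abs_div, abs_mul, abs_of_pos hk, abs_of_pos (mul_pos hupos hvpos)]
      rw [div_eq_mul_one_div]
      calc k * |v - u| * (1 / (u * v))
          ≤ k * (|F x| + |ε₁ - ε₂|) * (4 / ε' ^ 2) := by
            apply mul_le_mul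
            · exact mul_le_mul_of_nonneg_left hvu hk.le
            · exact hinv
            · positivity
            · positivity
        _ = k * (4 / ε' ^ 2) * (|F x| + |ε₁ - ε₂|) := by ring
    have : ‖h x‖ ≤ |k / u - k / v| + a * |F x| := by
      rw [hh]
      simp only [Real.norm_eq_abs]
      calc |k / u - k / v - a * F x| ≤ |k / u - k / v| + |a * F x| := abs_sub _ _
      _ = |k / u - k / v| + a * |F x| := by rw [abs_mul, abs_of_nonneg ha]
    refine this.trans ?_
    simp only [Real.norm_eq_abs]
    nlinarith [abs_nonneg (F x)]
  -- F 0 = 0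
  have hF0 : ‖F 0‖ ≤ 0 := by
    have := hFint 0 le_rfl
    simp only [intervalIntegral.integral_same] at this
    simp [this]
  have := norm_le_gronwallBound_of_norm_deriv_right_le
    ((hc1.sub hc2).continuousOn) hderiv hF0 hbound t (by exact ⟨ht, le_rfl⟩)
  simpa using this

/-- Lemma 5 (pathwise): continuity of ε ↦ Y_ε(t) on (0, ∞). -/
theorem eps_approx_continuous_in_eps
    (Y₀ k a σ : ℝ) (hY₀ : 0 < Y₀) (hk : 0 < k) (ha : 0 < a) (hσ : 0 < σ)
    (g : ℝ → ℝ) (hg : Continuous g) (hg0 : g 0 = 0)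
    (Y : ℝ → ℝ → ℝ)
    (hYc : ∀ ε : ℝ, 0 < ε → Continuous (Y ε))
    (hYeq : ∀ ε : ℝ, 0 < ε → ∀ t : ℝ, 0 ≤ t →
      Y ε t = Y₀ + (∫ s in (0:ℝ)..t, k / ((if 0 < Y ε s then Y ε s else 0) + ε))
        - a * (∫ s in (0:ℝ)..t, Y ε s) + σ * g t)
    (huniq : ∀ ε : ℝ, 0 < ε → ∀ Z : ℝ → ℝ, Continuous Z →
      (∀ t : ℝ, 0 ≤ t →
        Z t = Y₀ + (∫ s in (0:ℝ)..t, k / ((if 0 < Z s then Z s else 0) + ε))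
          - a * (∫ s in (0:ℝ)..t, Z s) + σ * g t) →
      ∀ t : ℝ, 0 ≤ t → Z t = Y ε t) :
    ∀ ε' : ℝ, 0 < ε' → ∀ t : ℝ, 0 < t →
      Tendsto (fun ε => Y ε t) (𝓝[≠] ε') (𝓝 (Y ε' t)) := by
  intro ε' hε' t ht
  set K : ℝ := k * (4 / ε' ^ 2) + a with hK
  have hKpos : 0 < K := by positivity
  -- eventual bound
  have hev : ∀ᶠ ε in 𝓝[≠] ε', ‖Y ε t - Y ε' t‖ ≤
      gronwallBound 0 K (k * (4 / ε' ^ 2) * |ε - ε'|) t := by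
    have hmem : Ioi (ε' / 2) ∈ 𝓝[≠] ε' :=
      nhdsWithin_le_nhds (Ioi_mem_nhds (by linarith))
    filter_upwards [hmem] with ε hε
    have hεpos : 0 < ε := lt_trans (by linarith) hε
    rw [Real.norm_eq_abs]
    exact key_estimate Y₀ k a σ hk ha.le g hg0 ε' ε ε' hε' (le_of_lt hε) (by linarith)
      (Y ε) (Y ε') (hYc ε hεpos) (hYc ε' hε') (hYeq ε hεpos) (hYeq ε' hε') t ht.le
  -- the bound tends to 0
  have hlim : Tendsto (fun ε => gronwallBound 0 K (k * (4 / ε' ^ 2) * |ε - ε'|) t)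
      (𝓝[≠] ε') (𝓝 0) := by
    have hcont : Continuous fun ε : ℝ => gronwallBound 0 K (k * (4 / ε' ^ 2) * |ε - ε'|) t := by
      exact (gronwallBound_continuous_ε 0 K t).comp
        (continuous_const.mul ((continuous_id.sub continuous_const).abs))
    have h0 : gronwallBound 0 K (k * (4 / ε' ^ 2) * |ε' - ε'|) t = 0 := by
      simp [gronwallBound_ε0_δ0]
    have := hcont.continuousAt (x := ε').tendsto
    rw [h0] at this
    exact this.mono_left nhdsWithin_le_nhds
  have hdiff : Tendsto (fun ε => Y ε t - Y ε' t) (𝓝[≠] ε') (𝓝 0) :=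
    squeeze_zero_norm' hev hlim
  have := hdiff.add (tendsto_const_nhds (x := Y ε' t) (f := 𝓝[≠] ε'))
  simpa using this
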